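/- For all real numbers a, b ≥ 0, |(a+1)·e^{−a} − (b+1)·e^{−b}| ≥ |a − b| · √(a·b) · e^{−(a+b)/2}. -/

import Mathlib

open Real

lemma cosh_ineq (u : ℝ) (hu : 0 ≤ u) : 2 + u^2 ≤ Real.exp u + Real.exp (-u) := by
  have h1 : Real.exp u + Real.exp (-u) = 2 * Real.cosh u := by
    rw [Real.cosh_eq]; ring
  have h2 : Real.cosh u = 2 * Real.sinh (u/2)^2 + 1 := by
    have h := Real.cosh_two_mul (u/2)
    have hc : Real.cosh (u/2)^2 = Real.sinh (u/2)^2 + 1 := Real.cosh_sq (u/2)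
    rw [show (2:ℝ) * (u/2) = u by ring] at h
    rw [h, hc]; ring
  have h3 : u/2 ≤ Real.sinh (u/2) := Real.self_le_sinh_iff.2 (by linarith)
  nlinarith [h3]

lemma G_nonneg (u : ℝ) (hu : 0 ≤ u) :
    (u+1) * Real.exp (-u) + u^2 + u^4/4 ≤ (u-1) * Real.exp u + 2 := by
  set g : ℝ → ℝ := fun x => (x-1)*Real.exp x + 2 - ((x+1)*Real.exp (-x) + x^2 + x^4/4) with hg
  have hderiv : ∀ x : ℝ, HasDerivAt g (x * (Real.exp x + Real.exp (-x) - 2 - x^2)) x := by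
    intro x
    have h1 : HasDerivAt (fun x : ℝ => (x-1)*Real.exp x)
        (1 * Real.exp x + (x-1)*Real.exp x) x :=
      ((hasDerivAt_id x).sub_const 1).mul (Real.hasDerivAt_exp x)
    have he : HasDerivAt (fun x : ℝ => Real.exp (-x)) (-Real.exp (-x)) x := by
      simpa [Function.comp_def] using (Real.hasDerivAt_exp (-x)).comp x ((hasDerivAt_id x).neg)
    have h2 : HasDerivAt (fun x : ℝ => (x+1)*Real.exp (-x))
        (1 * Real.exp (-x) + (x+1)*(-Real.exp (-x))) x :=
      ((hasDerivAt_id x).add_const 1).mul he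
    have h3 : HasDerivAt (fun x : ℝ => x^2) (2*x) x := by
      simpa using hasDerivAt_pow 2 x
    have h4 : HasDerivAt (fun x : ℝ => x^4/4) (4*x^3/4) x := by
      simpa using (hasDerivAt_pow 4 x).div_const 4
    have := ((h1.add_const 2).sub ((h2.add h3).add h4))
    refine this.congr_deriv ?_
    ring
  have hmono : MonotoneOn g (Set.Ici 0) := by
    apply monotoneOn_of_deriv_nonneg (convex_Ici 0)
    · exact fun x _ => ((hderiv x).differentiableAt.continuousAt).continuousWithinAt
    · intro x hx
      rw [interior_Ici] at hx
      exact ((hderiv x).differentiableAt).differentiableWithinAt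
    · intro x hx
      rw [interior_Ici, Set.mem_Ioi] at hx
      rw [(hderiv x).deriv]
      have := cosh_ineq x hx.le
      have : 0 ≤ Real.exp x + Real.exp (-x) - 2 - x^2 := by linarith
      positivity
  have h0 : g 0 ≤ g u := hmono (Set.mem_Ici.2 le_rfl) (Set.mem_Ici.2 hu) hu
  have hg0 : g 0 = 0 := by simp [hg]; norm_num
  rw [hg0] at h0
  simp only [hg] at h0
  linarith

lemma key_lemma (b t : ℝ) (hb : 0 ≤ b) (ht : 0 ≤ t) :
    2*t*Real.sqrt (b*(b+2*t)) ≤ (b+1)*Real.exp t - (b+2*t+1)*Real.exp (-t) := by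
  set S := Real.sinh t with hSdef
  set C := Real.sinh t - t * Real.exp (-t) with hCdef
  have hsinh : Real.sinh t = (Real.exp t - Real.exp (-t))/2 := Real.sinh_eq t
  have hxy : Real.exp t * Real.exp (-t) = 1 := by
    rw [← Real.exp_add]; simp
  have hS : t ≤ S := Real.self_le_sinh_iff.2 ht
  have het : Real.exp (-t) ≤ 1 := Real.exp_le_one_iff.2 (by linarith)
  have hetpos : 0 < Real.exp (-t) := Real.exp_pos _
  have hC : 0 ≤ C := by
    have : t * Real.exp (-t) ≤ t := by nlinarith
    simp only [hCdef]; linarith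
  -- G at 2t gives: t^4 + C^2 ≤ 2*t*S*C
  have hG : t^4 + C^2 ≤ 2*t*S*C := by
    have h := G_nonneg (2*t) (by linarith)
    have h2 : Real.exp (2*t) = Real.exp t * Real.exp t := by
      rw [← Real.exp_add]; ring_nf
    have h3 : Real.exp (-(2*t)) = Real.exp (-t) * Real.exp (-t) := by
      rw [← Real.exp_add]; ring_nf
    rw [h2, h3] at h
    simp only [hCdef, hSdef, hsinh]
    nlinarith [h, hxy]
  -- RHS equals 2*(b*S + C)
  have hRHS : (b+1)*Real.exp t - (b+2*t+1)*Real.exp (-t) = 2*(b*S + C) := by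
    simp only [hCdef, hSdef, hsinh]; ring
  rw [hRHS]
  have hS2 : t^2 ≤ S^2 := by nlinarith
  set D := Real.sqrt (S^2 - t^2) with hDdef
  have hDnn : 0 ≤ D := Real.sqrt_nonneg _
  have hD2 : D^2 = S^2 - t^2 := Real.sq_sqrt (by linarith)
  have hstepA : 0 ≤ S*C - t^3 + C*D := by
    have hsq : (t^3 - S*C)^2 ≤ C^2*(S^2-t^2) := by nlinarith [hG, sq_nonneg t, mul_le_mul_of_nonneg_left hG (sq_nonneg t)]
    have h1 : t^3 - S*C ≤ |t^3 - S*C| := le_abs_self _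
    have h2 : |t^3 - S*C| = Real.sqrt ((t^3 - S*C)^2) := (Real.sqrt_sq_eq_abs _).symm
    have h3 : Real.sqrt ((t^3 - S*C)^2) ≤ Real.sqrt (C^2*(S^2-t^2)) := Real.sqrt_le_sqrt hsq
    have h4 : Real.sqrt (C^2*(S^2-t^2)) = C*D := by
      rw [hDdef, ← Real.sqrt_sq hC, ← Real.sqrt_mul (sq_nonneg C), Real.sqrt_sq hC]
    linarith [h1, h2 ▸ h1, h3, h4 ▸ h3]
  have hbSC : 0 ≤ b*S + C := by positivity
  have hmain : t^2*(b*(b+2*t)) ≤ (b*S+C)^2 := by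
    have hz : S^2 - t^2 - D^2 = 0 := by rw [hD2]; ring
    nlinarith [sq_nonneg (b*D - C), mul_nonneg hb hstepA, hz, sq_nonneg b, mul_nonneg (mul_nonneg hb hb) hstepA]
  have hfin : t*Real.sqrt (b*(b+2*t)) ≤ b*S + C := by
    have e1 : t*Real.sqrt (b*(b+2*t)) = Real.sqrt (t^2*(b*(b+2*t))) := by
      rw [Real.sqrt_mul (sq_nonneg t), Real.sqrt_sq ht]
    rw [e1]
    calc Real.sqrt (t^2*(b*(b+2*t))) ≤ Real.sqrt ((b*S+C)^2) := Real.sqrt_le_sqrt hmain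
      _ = b*S + C := Real.sqrt_sq hbSC
  linarith

theorem vanDerCorput_K (a b : ℝ) (ha : 0 ≤ a) (hb : 0 ≤ b) :
    |(a + 1) * Real.exp (-a) - (b + 1) * Real.exp (-b)| ≥
      |a - b| * Real.sqrt (a * b) * Real.exp (-(a + b) / 2) := by
  wlog hab : b ≤ a with H
  · have h := H b a hb ha (le_of_not_ge hab)
    rw [abs_sub_comm, abs_sub_comm b a, mul_comm b a, add_comm b a] at h
    exact h
  · set t := (a-b)/2 with htdef
    have ht : 0 ≤ t := by simp only [htdef]; linarith
    have hab2 : a = b + 2*t := by simp only [htdef]; ring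
    have key := key_lemma b t hb ht
    rw [← hab2] at key
    have habs : |a - b| = 2*t := by rw [abs_of_nonneg (by linarith)]; simp only [htdef]; ring
    have hE : 0 < Real.exp (-(a+b)/2) := Real.exp_pos _
    have hmul := mul_le_mul_of_nonneg_right key hE.le
    have e1 : Real.exp t * Real.exp (-(a+b)/2) = Real.exp (-b) := by
      rw [← Real.exp_add]; congr 1; rw [hab2]; ring
    have e2 : Real.exp (-t) * Real.exp (-(a+b)/2) = Real.exp (-a) := by
      rw [← Real.exp_add]; congr 1; rw [hab2]; ring
    have hba : b * a = a * b := mul_comm b a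
    have h2 : (a-b) * Real.sqrt (a*b) * Real.exp (-(a+b)/2) ≤
        (b+1)*Real.exp (-b) - (a+1)*Real.exp (-a) := by
      have : 2*t*Real.sqrt (b*a) * Real.exp (-(a+b)/2) ≤
          ((b+1)*Real.exp t - (a+1)*Real.exp (-t)) * Real.exp (-(a+b)/2) := hmul
      calc (a-b) * Real.sqrt (a*b) * Real.exp (-(a+b)/2)
          = 2*t*Real.sqrt (b*a) * Real.exp (-(a+b)/2) := by rw [hba]; simp only [htdef]; ring
        _ ≤ ((b+1)*Real.exp t - (a+1)*Real.exp (-t)) * Real.exp (-(a+b)/2) := hmul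
        _ = (b+1)*Real.exp (-b) - (a+1)*Real.exp (-a) := by
            rw [sub_mul, mul_assoc, mul_assoc, e1, e2]
    have h3 : (b+1)*Real.exp (-b) - (a+1)*Real.exp (-a) ≤
        |(a + 1) * Real.exp (-a) - (b + 1) * Real.exp (-b)| := by
      rw [abs_sub_comm]
      exact le_abs_self _
    rw [ge_iff_le, habs]
    calc 2*t * Real.sqrt (a*b) * Real.exp (-(a+b)/2)
        = (a-b) * Real.sqrt (a*b) * Real.exp (-(a+b)/2) := by simp only [htdef]; ring
      _ ≤ _ := le_trans h2 h3
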